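/- Let (Q_n)_{n≥1} be a positive sequence, regularly varying at infinity with some index -γ where γ > 1 (hence ∑ Q_n < ∞). Then for every ε > 0 there exists N such that limsup_{n→∞} (1/Q_n) ∑_{k=N}^{n-N} Q_k Q_{n-k} ≤ ε. Equivalently, lim_{N→∞} limsup_{n→∞} (1/Q_n) ∑_{k=N}^{n-N} Q_k Q_{n-k} = 0. -/

import Mathlib

/-- A positive sequence `a` is regularly varying at infinity with index `ρ`
if `a ⌊l·n⌋ / a n → l ^ ρ` for every `l > 0`. -/
def RegVar (a : ℕ → ℝ) (ρ : ℝ) : Prop :=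
  ∀ l : ℝ, 0 < l →
    Filter.Tendsto (fun n : ℕ => a ⌊l * (n : ℝ)⌋₊ / a n) Filter.atTop
      (nhds (l ^ ρ))

open MeasureTheory Filter Set ENNReal


private lemma floorEq {n p : ℕ} (hn : 0 < n) {l : ℝ}
    (h1 : (p : ℝ) / n ≤ l) (h2 : l < ((p : ℝ) + 1) / n) : ⌊l * n⌋₊ = p := by
  have hn' : (0 : ℝ) < n := by exact_mod_cast hn
  have hl : 0 ≤ l := le_trans (by positivity) h1
  rw [Nat.floor_eq_iff (by positivity)]
  exact ⟨(div_le_iff₀ hn').mp h1, (lt_div_iff₀ hn').mp h2⟩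

private lemma card_le_of_mul (c : ℕ) (M : ℝ) (hM : 0 < M)
    (h : (c : ℝ) * (1 / M) ≤ 1 / 20) : (c : ℝ) ≤ M / 20 := by
  rw [mul_one_div, div_le_div_iff₀ hM (by norm_num)] at h
  rw [le_div_iff₀ (by norm_num : (0:ℝ) < 20)]
  linarith

private lemma exists_good_p (E : Set ℝ) (hE : E ⊆ Set.Icc (1/5) 5)
    (hB : volume (Set.Icc (1/5 : ℝ) 5 \ E) ≤ ENNReal.ofReal (1/20))
    (n m : ℕ) (hm1 : 1 ≤ m) (hmn : m ≤ n) (hnm : n ≤ 2 * m) :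
    ∃ p : ℕ, n ≤ p ∧ p ≤ 2 * n ∧
      (E ∩ Set.Ico ((p : ℝ) / n) (((p : ℝ) + 1) / n)).Nonempty ∧
      (E ∩ Set.Ico ((m : ℝ) / p) (((m : ℝ) + 1) / p)).Nonempty := by
  classical
  have hn1 : 1 ≤ n := hm1.trans hmn
  have hn' : (0 : ℝ) < n := by exact_mod_cast hn1
  have hn1' : (1 : ℝ) ≤ n := by exact_mod_cast hn1
  have hm' : (0 : ℝ) < m := by exact_mod_cast hm1
  set B : Set ℝ := Set.Icc (1/5 : ℝ) 5 \ E with hBdef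
  set P : Finset ℕ := Finset.Icc n (2*n) with hPdef
  set I1 : ℕ → Set ℝ := fun p => Set.Ico ((p : ℝ) / n) (((p : ℝ) + 1) / n) with hI1def
  set I2 : ℕ → Set ℝ := fun p => Set.Ico ((m : ℝ) / p) (((m : ℝ) + 1) / p) with hI2def
  set bad1 : Finset ℕ := P.filter (fun p => ¬ (E ∩ I1 p).Nonempty) with hbad1def
  set bad2 : Finset ℕ := P.filter (fun p => ¬ (E ∩ I2 p).Nonempty) with hbad2def
  have hPmem : ∀ p ∈ P, n ≤ p ∧ p ≤ 2 * n := fun p hp => Finset.mem_Icc.mp hp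
  have hsub1 : ∀ p ∈ bad1, I1 p ⊆ B := by
    intro p hp
    obtain ⟨hpP, hpE⟩ := Finset.mem_filter.mp hp
    obtain ⟨hnp, hp2n⟩ := hPmem p hpP
    have hnp' : (n : ℝ) ≤ p := by exact_mod_cast hnp
    have hp2n' : (p : ℝ) ≤ 2 * n := by exact_mod_cast hp2n
    rintro x ⟨hx1, hx2⟩
    refine ⟨⟨?_, ?_⟩, fun hxE => hpE ⟨x, hxE, hx1, hx2⟩⟩
    · have : (1:ℝ) ≤ (p:ℝ)/n := (one_le_div hn').mpr hnp'
      linarith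
    · have : ((p:ℝ)+1)/n ≤ 3 := by rw [div_le_iff₀ hn']; linarith
      linarith
  have hsub2 : ∀ p ∈ bad2, I2 p ⊆ B := by
    intro p hp
    obtain ⟨hpP, hpE⟩ := Finset.mem_filter.mp hp
    obtain ⟨hnp, hp2n⟩ := hPmem p hpP
    have hp0 : (0:ℝ) < p := lt_of_lt_of_le hn' (by exact_mod_cast hnp)
    have hnp' : (n : ℝ) ≤ p := by exact_mod_cast hnp
    have hp2n' : (p : ℝ) ≤ 2 * n := by exact_mod_cast hp2n
    have hnm' : (n:ℝ) ≤ 2 * m := by exact_mod_cast hnm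
    have hmn' : (m:ℝ) ≤ n := by exact_mod_cast hmn
    rintro x ⟨hx1, hx2⟩
    refine ⟨⟨?_, ?_⟩, fun hxE => hpE ⟨x, hxE, hx1, hx2⟩⟩
    · have : (1:ℝ)/5 ≤ (m:ℝ)/p := by
        rw [div_le_div_iff₀ (by norm_num) hp0]; linarith
      linarith
    · have : ((m:ℝ)+1)/p ≤ 2 := by rw [div_le_iff₀ hp0]; linarith
      linarith
  have hI1vol : ∀ p : ℕ, volume (I1 p) = ENNReal.ofReal (1/(n:ℝ)) := by
    intro p
    rw [hI1def]
    simp only [Real.volume_Ico]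
    congr 1
    field_simp
    ring
  have key1 : ∀ p q : ℕ, p < q → Disjoint (I1 p) (I1 q) := by
    intro p q hpq
    rw [Set.disjoint_left]
    rintro x ⟨hx1, hx2⟩ ⟨hy1, hy2⟩
    have hq : ((p:ℝ)+1) ≤ q := by exact_mod_cast hpq
    have : ((p:ℝ)+1)/n ≤ (q:ℝ)/n := by gcongr
    linarith
  have hdisj1 : (↑bad1 : Set ℕ).PairwiseDisjoint I1 := by
    intro p _ q _ hpq
    rcases hpq.lt_or_gt with h | h
    · exact key1 p q h
    · exact (key1 q p h).symm
  have hsum1 : ∑ p ∈ bad1, volume (I1 p) ≤ ENNReal.ofReal (1/20) := by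
    rw [← measure_biUnion_finset hdisj1 (fun p _ => measurableSet_Ico)]
    exact le_trans (measure_mono (Set.iUnion₂_subset hsub1)) hB
  have hb1 : (bad1.card : ℝ) ≤ (n:ℝ)/20 := by
    apply card_le_of_mul _ _ hn'
    have h1 : ∑ p ∈ bad1, volume (I1 p) = (bad1.card : ℝ≥0∞) * ENNReal.ofReal (1/(n:ℝ)) := by
      rw [Finset.sum_congr rfl (fun p _ => hI1vol p), Finset.sum_const, nsmul_eq_mul]
    rw [h1] at hsum1
    rw [show ((bad1.card : ℝ≥0∞)) = ENNReal.ofReal ((bad1.card:ℝ)) from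
      (ENNReal.ofReal_natCast _).symm, ← ENNReal.ofReal_mul (by positivity)] at hsum1
    exact (ENNReal.ofReal_le_ofReal_iff (by norm_num)).mp hsum1
  -- bad2 estimates
  have key2 : ∀ p q, p ∈ P → q ∈ P → p + 5 ≤ q → Disjoint (I2 p) (I2 q) := by
    intro p q hpP hqP hpq
    obtain ⟨hnp, hp2n⟩ := hPmem p hpP
    obtain ⟨hnq, hq2n⟩ := hPmem q hqP
    rw [Set.disjoint_left]
    rintro x ⟨hx1, hx2⟩ ⟨hy1, hy2⟩
    have hp0 : (0:ℝ) < p := lt_of_lt_of_le hn' (by exact_mod_cast hnp)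
    have hq0 : (0:ℝ) < q := lt_of_lt_of_le hn' (by exact_mod_cast hnq)
    have hkey : ((m:ℝ)+1) * p ≤ (m:ℝ) * q := by
      have h1 : (p:ℝ) + 5 ≤ q := by exact_mod_cast hpq
      have h2 : (p:ℝ) ≤ 2*n := by exact_mod_cast hp2n
      have h3 : (n:ℝ) ≤ 2*m := by exact_mod_cast hnm
      nlinarith
    have : ((m:ℝ)+1)/q ≤ (m:ℝ)/p := by
      rw [div_le_div_iff₀ hq0 hp0]; linarith
    linarith
  have hI2vol : ∀ p : ℕ, 0 < p → volume (I2 p) = ENNReal.ofReal (1/(p:ℝ)) := by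
    intro p hp
    have hp' : (0:ℝ) < p := by exact_mod_cast hp
    rw [hI2def]
    simp only [Real.volume_Ico]
    congr 1
    field_simp
    ring
  have hb2r : ∀ r : ℕ, ((bad2.filter (fun p => p % 5 = r)).card : ℝ) ≤ (2*(n:ℝ))/20 := by
    intro r
    set b2r := bad2.filter (fun p => p % 5 = r) with hb2rdef
    have hb2rP : ∀ p ∈ b2r, p ∈ P := by
      intro p hp
      exact (Finset.mem_filter.mp ((Finset.mem_filter.mp hp).1)).1
    have hdisj2 : (↑b2r : Set ℕ).PairwiseDisjoint I2 := by
      intro p hp q hq hpq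
      have hpm := (Finset.mem_filter.mp hp).2
      have hqm := (Finset.mem_filter.mp hq).2
      have hp5 : p + 5 ≤ q ∨ q + 5 ≤ p := by omega
      rcases hp5 with h | h
      · exact key2 p q (hb2rP p hp) (hb2rP q hq) h
      · exact (key2 q p (hb2rP q hq) (hb2rP p hp) h).symm
    have hsum2 : ∑ p ∈ b2r, volume (I2 p) ≤ ENNReal.ofReal (1/20) := by
      rw [← measure_biUnion_finset hdisj2 (fun p _ => measurableSet_Ico)]
      refine le_trans (measure_mono (Set.iUnion₂_subset ?_)) hB
      intro p hp
      exact hsub2 p (Finset.mem_filter.mp hp).1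
    have hlow : ∀ p ∈ b2r, ENNReal.ofReal (1/(2*(n:ℝ))) ≤ volume (I2 p) := by
      intro p hp
      obtain ⟨hnp, hp2n⟩ := hPmem p (hb2rP p hp)
      have hp0 : 0 < p := hn1.trans hnp
      rw [hI2vol p hp0]
      apply ENNReal.ofReal_le_ofReal
      have hp' : (0:ℝ) < p := by exact_mod_cast hp0
      have hp2n' : (p:ℝ) ≤ 2*n := by exact_mod_cast hp2n
      rw [div_le_div_iff₀ (by positivity) hp']
      linarith
    have : (b2r.card : ℝ≥0∞) * ENNReal.ofReal (1/(2*(n:ℝ))) ≤ ENNReal.ofReal (1/20) := by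
      calc (b2r.card : ℝ≥0∞) * ENNReal.ofReal (1/(2*(n:ℝ)))
          = ∑ _p ∈ b2r, ENNReal.ofReal (1/(2*(n:ℝ))) := by
            rw [Finset.sum_const, nsmul_eq_mul]
        _ ≤ ∑ p ∈ b2r, volume (I2 p) := Finset.sum_le_sum hlow
        _ ≤ ENNReal.ofReal (1/20) := hsum2
    apply card_le_of_mul _ _ (by positivity)
    rw [show ((b2r.card : ℝ≥0∞)) = ENNReal.ofReal ((b2r.card:ℝ)) from
      (ENNReal.ofReal_natCast _).symm, ← ENNReal.ofReal_mul (by positivity)] at this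
    exact (ENNReal.ofReal_le_ofReal_iff (by norm_num)).mp this
  have hb2 : (bad2.card : ℝ) ≤ (n:ℝ)/2 := by
    have hfib : bad2.card = ∑ r ∈ Finset.range 5, (bad2.filter (fun p => p % 5 = r)).card :=
      Finset.card_eq_sum_card_fiberwise (fun p _ => Finset.mem_range.mpr (Nat.mod_lt _ (by norm_num)))
    have : (bad2.card : ℝ) = ∑ r ∈ Finset.range 5, ((bad2.filter (fun p => p % 5 = r)).card : ℝ) := by
      rw [hfib]; push_cast; ring
    rw [this]
    calc ∑ r ∈ Finset.range 5, ((bad2.filter (fun p => p % 5 = r)).card : ℝ)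
        ≤ ∑ _r ∈ Finset.range 5, (2*(n:ℝ))/20 := Finset.sum_le_sum (fun r _ => hb2r r)
      _ = 5 * ((2*(n:ℝ))/20) := by rw [Finset.sum_const]; simp
      _ = (n:ℝ)/2 := by ring
  -- conclusion
  have hsubbad : bad1 ∪ bad2 ⊆ P := by
    apply Finset.union_subset <;> exact Finset.filter_subset _ _
  have hcardP : P.card = n + 1 := by rw [hPdef, Nat.card_Icc]; omega
  have hcardlt : (bad1 ∪ bad2).card < P.card := by
    have hcb : ((bad1 ∪ bad2).card : ℝ) ≤ (bad1.card : ℝ) + (bad2.card : ℝ) := by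
      exact_mod_cast Finset.card_union_le _ _
    have : ((bad1 ∪ bad2).card : ℝ) < (P.card : ℝ) := by
      rw [hcardP]; push_cast; linarith
    exact_mod_cast this
  have hne : (P \ (bad1 ∪ bad2)).Nonempty := by
    rw [← Finset.card_pos, Finset.card_sdiff_of_subset hsubbad]
    omega
  obtain ⟨p, hp⟩ := hne
  rw [Finset.mem_sdiff, Finset.mem_union] at hp
  obtain ⟨hpP, hpbad⟩ := hp
  obtain ⟨hnp, hp2n⟩ := hPmem p hpP
  refine ⟨p, hnp, hp2n, ?_, ?_⟩
  · by_contra h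
    exact hpbad (Or.inl (Finset.mem_filter.mpr ⟨hpP, h⟩))
  · by_contra h
    exact hpbad (Or.inr (Finset.mem_filter.mpr ⟨hpP, h⟩))

private lemma egorov_bound (Q : ℕ → ℝ) (hQpos : ∀ n, 1 ≤ n → 0 < Q n)
    (γ : ℝ) (hγ : 1 < γ) (hrv : RegVar Q (-γ)) :
    ∃ E : Set ℝ, E ⊆ Set.Icc (1/5) 5 ∧
      volume (Set.Icc (1/5 : ℝ) 5 \ E) ≤ ENNReal.ofReal (1/20) ∧
      ∃ n₀ : ℕ, 1 ≤ n₀ ∧ ∀ n, n₀ ≤ n → ∀ l ∈ E,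
        Q ⌊l * (n : ℝ)⌋₊ ≤ ((5:ℝ) ^ γ + 1) * Q n := by
  set F : ℕ → ℝ → ℝ := fun n l => Q ⌊l * (n:ℝ)⌋₊ / Q n with hF
  set G : ℝ → ℝ := fun l => l ^ (-γ) with hG
  have hFm : ∀ n : ℕ, StronglyMeasurable (F n) := by
    intro n
    apply Measurable.stronglyMeasurable
    apply Measurable.div_const
    exact measurable_from_top.comp (Nat.measurable_floor.comp (measurable_id.mul_const _))
  have hGm : StronglyMeasurable G := by
    apply Measurable.stronglyMeasurable
    fun_prop
  have hfg : ∀ᵐ x ∂volume, x ∈ Set.Icc (1/5 : ℝ) 5 →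
      Tendsto (fun n => F n x) atTop (nhds (G x)) := by
    refine Eventually.of_forall (fun x hx => ?_)
    exact hrv x (lt_of_lt_of_le (by norm_num) hx.1)
  obtain ⟨t, hts, htm, htμ, hunif⟩ :=
    tendstoUniformlyOn_of_ae_tendsto (μ := volume) hFm hGm measurableSet_Icc
      (measure_Icc_lt_top).ne hfg (by norm_num : (0:ℝ) < 1/20)
  refine ⟨Set.Icc (1/5 : ℝ) 5 \ t, Set.diff_subset, ?_, ?_⟩
  · refine le_trans (measure_mono ?_) htμ
    intro x hx
    obtain ⟨hx1, hx2⟩ := hx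
    by_contra hxt
    exact hx2 ⟨hx1, hxt⟩
  · rw [Metric.tendstoUniformlyOn_iff] at hunif
    have h1 := hunif 1 one_pos
    rw [eventually_atTop] at h1
    obtain ⟨n₀', hn₀'⟩ := h1
    refine ⟨max n₀' 1, le_max_right _ _, fun n hn l hl => ?_⟩
    have hn1 : 1 ≤ n := le_trans (le_max_right _ _) hn
    have hQn : 0 < Q n := hQpos n hn1
    have hd := hn₀' n (le_trans (le_max_left _ _) hn) l hl
    rw [Real.dist_eq] at hd
    have hFle : F n l ≤ G l + 1 := by
      have := abs_lt.mp hd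
      linarith [this.1, this.2]
    have hl5 : (1/5 : ℝ) ≤ l := hl.1.1
    have hGle : G l ≤ (5:ℝ) ^ γ := by
      have hlpos : (0:ℝ) < l := lt_of_lt_of_le (by norm_num) hl5
      have h1 : ((5:ℝ)^γ)⁻¹ ≤ l ^ γ := by
        rw [← Real.inv_rpow (by norm_num : (0:ℝ) ≤ 5)]
        exact Real.rpow_le_rpow (by norm_num) (by rw [inv_eq_one_div]; exact hl5) (by linarith)
      show l ^ (-γ) ≤ (5:ℝ)^γ
      rw [Real.rpow_neg hlpos.le]
      exact (inv_le_comm₀ (Real.rpow_pos_of_pos hlpos _)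
        (Real.rpow_pos_of_pos (by norm_num) _)).mpr h1
    have : Q ⌊l * (n:ℝ)⌋₊ / Q n ≤ (5:ℝ)^γ + 1 := le_trans hFle (by linarith)
    calc Q ⌊l * (n:ℝ)⌋₊ = (Q ⌊l * (n:ℝ)⌋₊ / Q n) * Q n := by field_simp
      _ ≤ ((5:ℝ)^γ + 1) * Q n := mul_le_mul_of_nonneg_right this hQn.le

private lemma key_bound (Q : ℕ → ℝ) (hQpos : ∀ n, 1 ≤ n → 0 < Q n)
    (γ : ℝ) (hγ : 1 < γ) (hrv : RegVar Q (-γ)) :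
    ∃ C : ℝ, 0 < C ∧ ∃ n₂ : ℕ, 1 ≤ n₂ ∧
      ∀ n, n₂ ≤ n → ∀ m, m ≤ n → n ≤ 2 * m → Q m ≤ C * Q n := by
  obtain ⟨E, hE, hB, n₀, hn₀1, hbound⟩ := egorov_bound Q hQpos γ hγ hrv
  set C₀ : ℝ := (5:ℝ)^γ + 1 with hC₀def
  have hC₀ : 0 < C₀ := by
    have := Real.rpow_pos_of_pos (show (0:ℝ) < 5 by norm_num) γ
    rw [hC₀def]; linarith
  refine ⟨C₀ * C₀, by positivity, n₀, hn₀1, ?_⟩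
  intro n hn m hmn hnm
  have hn1 : 1 ≤ n := le_trans hn₀1 hn
  have hm1 : 1 ≤ m := by omega
  obtain ⟨p, hnp, hp2n, ⟨t, htE, ht1, ht2⟩, ⟨u, huE, hu1, hu2⟩⟩ :=
    exists_good_p E hE hB n m hm1 hmn hnm
  have hn0 : 0 < n := hn1
  have hfl1 : ⌊t * (n:ℝ)⌋₊ = p := floorEq hn0 ht1 ht2
  have hp0 : 0 < p := lt_of_lt_of_le hn0 hnp
  have hfl2 : ⌊u * (p:ℝ)⌋₊ = m := floorEq hp0 hu1 hu2
  have h1 : Q p ≤ C₀ * Q n := hfl1 ▸ hbound n hn t htE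
  have h2 : Q m ≤ C₀ * Q p := hfl2 ▸ hbound p (le_trans hn hnp) u huE
  calc Q m ≤ C₀ * Q p := h2
    _ ≤ C₀ * (C₀ * Q n) := mul_le_mul_of_nonneg_left h1 hC₀.le
    _ = (C₀ * C₀) * Q n := by ring
private lemma summable_Q (Q : ℕ → ℝ) (hQpos : ∀ n, 1 ≤ n → 0 < Q n)
    (γ : ℝ) (hγ : 1 < γ) (hrv : RegVar Q (-γ)) : Summable Q := by
  obtain ⟨C, hC, n₂, hn₂1, hL1⟩ := key_bound Q hQpos γ hγ hrv
  have h2γlt : (2:ℝ) ^ (-γ) < 1/2 := by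
    have h := Real.rpow_lt_rpow_of_exponent_lt (x := 2) one_lt_two (by linarith : -γ < -1)
    rw [Real.rpow_neg_one] at h
    linarith [h]
  set ρ : ℝ := ((2:ℝ)^(-γ) + 1/2)/2 with hρdef
  have h2γpos : (0:ℝ) < (2:ℝ)^(-γ) := Real.rpow_pos_of_pos (by norm_num) _
  have hρ0 : 0 < ρ := by rw [hρdef]; linarith
  have hρ2 : ρ < 1/2 := by rw [hρdef]; linarith
  have hρgt : (2:ℝ)^(-γ) < ρ := by rw [hρdef]; linarith
  have hev := ((hrv 2 two_pos).eventually_lt_const hρgt)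
  rw [eventually_atTop] at hev
  obtain ⟨n₃, hn₃⟩ := hev
  set n₄ : ℕ := max (max n₂ n₃) 1 with hn₄def
  have hn₄1 : 1 ≤ n₄ := le_max_right _ _
  have hn₄2 : n₂ ≤ n₄ := le_trans (le_max_left _ _) (le_max_left _ _)
  have hn₄3 : n₃ ≤ n₄ := le_trans (le_max_right _ _) (le_max_left _ _)
  have hQn₄ : 0 < Q n₄ := hQpos _ hn₄1
  have hdouble : ∀ k : ℕ, n₄ ≤ k → Q (2 * k) ≤ ρ * Q k := by
    intro k hk
    have hk1 : 1 ≤ k := le_trans hn₄1 hk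
    have h := hn₃ k (le_trans hn₄3 hk)
    have hfl : ⌊(2:ℝ) * (k:ℝ)⌋₊ = 2 * k := by
      rw [show (2:ℝ) * (k:ℝ) = ((2*k : ℕ):ℝ) by push_cast; ring, Nat.floor_natCast]
    rw [hfl] at h
    have hQk : 0 < Q k := hQpos k hk1
    exact le_of_lt ((div_lt_iff₀ hQk).mp h)
  have hgeo : ∀ i : ℕ, Q (2 ^ i * n₄) ≤ ρ ^ i * Q n₄ := by
    intro i
    induction i with
    | zero => simp
    | succ i ih =>
      have hle : n₄ ≤ 2 ^ i * n₄ := by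
        calc n₄ = 1 * n₄ := (one_mul _).symm
          _ ≤ 2 ^ i * n₄ := Nat.mul_le_mul_right _ (Nat.one_le_two_pow)
      have h1 : Q (2 ^ (i+1) * n₄) ≤ ρ * Q (2 ^ i * n₄) := by
        rw [show 2 ^ (i+1) * n₄ = 2 * (2 ^ i * n₄) by ring]
        exact hdouble _ hle
      calc Q (2 ^ (i+1) * n₄) ≤ ρ * Q (2 ^ i * n₄) := h1
        _ ≤ ρ * (ρ ^ i * Q n₄) := mul_le_mul_of_nonneg_left ih hρ0.le
        _ = ρ ^ (i+1) * Q n₄ := by ring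
  set s : ℝ := Real.logb 2 ρ with hsdef
  have hlog2 : 0 < Real.log 2 := Real.log_pos one_lt_two
  have hs1 : s < -1 := by
    have h := Real.log_lt_log hρ0 hρ2
    rw [show Real.log (1/2:ℝ) = -Real.log 2 by rw [one_div, Real.log_inv]] at h
    rw [hsdef, Real.logb, div_lt_iff₀ hlog2]
    linarith
  set A : ℝ := C * Q n₄ * ρ ^ (-(Real.logb 2 (n₄:ℝ))) with hAdef
  have hQb2 : ∀ k : ℕ, n₄ ≤ k → Q k ≤ A * (k:ℝ) ^ s := by
    intro k hk
    set j := Nat.log 2 (k / n₄) with hjdef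
    have hn₄0 : 0 < n₄ := hn₄1
    have hd1 : 1 ≤ k / n₄ := (Nat.one_le_div_iff hn₄0).mpr hk
    have h2j : 2 ^ j ≤ k / n₄ := Nat.pow_log_le_self 2 (by omega)
    have h2j' : k / n₄ < 2 ^ (j+1) := Nat.lt_pow_succ_log_self (by norm_num) _
    have hk1 : 2 ^ j * n₄ ≤ k := le_trans (Nat.mul_le_mul_right _ h2j) (Nat.div_mul_le_self k n₄)
    have hk2 : k < 2 ^ (j+1) * n₄ := (Nat.div_lt_iff_lt_mul hn₄0).mp h2j'
    have hnle : n₂ ≤ 2 ^ (j+1) * n₄ := by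
      refine le_trans hn₄2 ?_
      calc n₄ = 1 * n₄ := (one_mul _).symm
        _ ≤ 2 ^ (j+1) * n₄ := Nat.mul_le_mul_right _ (Nat.one_le_two_pow)
    have hle2 : 2 ^ (j+1) * n₄ ≤ 2 * k := by
      calc 2 ^ (j+1) * n₄ = 2 * (2 ^ j * n₄) := by ring
        _ ≤ 2 * k := Nat.mul_le_mul_left _ hk1
    have hQk : Q k ≤ C * Q (2 ^ (j+1) * n₄) := hL1 _ hnle k (le_of_lt hk2) hle2
    have hQk2 : Q k ≤ C * Q n₄ * ρ ^ (j+1) := by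
      calc Q k ≤ C * Q (2 ^ (j+1) * n₄) := hQk
        _ ≤ C * (ρ ^ (j+1) * Q n₄) := mul_le_mul_of_nonneg_left (hgeo (j+1)) hC.le
        _ = C * Q n₄ * ρ ^ (j+1) := by ring
    -- now compare ρ ^ (j+1) with (k:ℝ) ^ s
    have hk0 : (0:ℝ) < k := by
      have : 1 ≤ k := le_trans hn₄1 hk
      exact_mod_cast this
    have hn₄0' : (0:ℝ) < (n₄:ℝ) := by exact_mod_cast hn₄0
    have hcast : (k:ℝ) < 2 ^ (j+1) * (n₄:ℝ) := by
      have := hk2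
      exact_mod_cast this
    have hlogb : Real.logb 2 (k:ℝ) - Real.logb 2 (n₄:ℝ) ≤ ((j:ℝ)+1) := by
      have h1 : Real.logb 2 (k:ℝ) < Real.logb 2 ((2:ℝ) ^ (j+1) * (n₄:ℝ)) :=
        Real.logb_lt_logb one_lt_two hk0 hcast
      rw [Real.logb_mul (by positivity) (by positivity), Real.logb_pow,
        Real.logb_self_eq_one one_lt_two] at h1
      push_cast at h1 ⊢
      linarith
    have hrpow1 : ρ ^ (j+1) ≤ ρ ^ (Real.logb 2 (k:ℝ) - Real.logb 2 (n₄:ℝ)) := by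
      rw [← Real.rpow_natCast ρ (j+1)]
      apply Real.rpow_le_rpow_of_exponent_ge hρ0 (by linarith)
      push_cast
      exact hlogb
    have hid : ρ ^ (Real.logb 2 (k:ℝ)) = (k:ℝ) ^ s := by
      rw [Real.rpow_def_of_pos hρ0, Real.rpow_def_of_pos hk0, hsdef, Real.logb, Real.logb]
      ring_nf
    have hrpow2 : ρ ^ (Real.logb 2 (k:ℝ) - Real.logb 2 (n₄:ℝ))
        = (k:ℝ) ^ s * ρ ^ (-(Real.logb 2 (n₄:ℝ))) := by
      rw [show Real.logb 2 (k:ℝ) - Real.logb 2 (n₄:ℝ)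
          = Real.logb 2 (k:ℝ) + (-(Real.logb 2 (n₄:ℝ))) by ring,
        Real.rpow_add hρ0, hid]
    calc Q k ≤ C * Q n₄ * ρ ^ (j+1) := hQk2
      _ ≤ C * Q n₄ * ((k:ℝ) ^ s * ρ ^ (-(Real.logb 2 (n₄:ℝ)))) := by
          apply mul_le_mul_of_nonneg_left _ (by positivity)
          rw [← hrpow2]; exact hrpow1
      _ = A * (k:ℝ) ^ s := by rw [hAdef]; ring
  -- summability
  rw [← summable_nat_add_iff n₄]
  have hsum0 : Summable (fun k : ℕ => (k:ℝ) ^ s) := Real.summable_nat_rpow.mpr hs1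
  have hsum1 : Summable (fun k : ℕ => ((k:ℝ)+1) ^ s) := by
    have := (summable_nat_add_iff 1).mpr hsum0
    refine this.congr (fun k => ?_)
    push_cast
    ring_nf
  have hA0 : 0 < A := by
    have : (0:ℝ) < ρ ^ (-(Real.logb 2 (n₄:ℝ))) := Real.rpow_pos_of_pos hρ0 _
    rw [hAdef]; positivity
  apply Summable.of_nonneg_of_le (fun i => (hQpos _ (by omega)).le)
    (fun i => ?_) (hsum1.mul_left A)
  have h1 : Q (i + n₄) ≤ A * ((i + n₄ : ℕ):ℝ) ^ s := hQb2 _ (by omega)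
  refine le_trans h1 ?_
  apply mul_le_mul_of_nonneg_left _ hA0.le
  apply Real.rpow_le_rpow_of_nonpos (by positivity)
  · push_cast
    have : (1:ℝ) ≤ (n₄:ℝ) := by exact_mod_cast hn₄1
    linarith
  · linarith
/-- for a positive sequence `(Q_n)` regularly varying with index
`-γ`, `γ > 1`, the middle part of the convolution is negligible:
for every `ε > 0` there is `N` with
`limsup_n (1/Q_n) ∑_{k=N}^{n-N} Q_k Q_{n-k} ≤ ε`. -/
theorem stmt7 (Q : ℕ → ℝ) (hQpos : ∀ n, 1 ≤ n → 0 < Q n)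
    (γ : ℝ) (hγ : 1 < γ) (hrv : RegVar Q (-γ)) :
    ∀ ε > (0 : ℝ), ∃ N : ℕ,
      Filter.limsup
        (fun n : ℕ => (1 / Q n) * ∑ k ∈ Finset.Icc N (n - N), Q k * Q (n - k))
        Filter.atTop ≤ ε := by
  intro ε hε
  obtain ⟨C, hC, n₂, hn₂1, hL1⟩ := key_bound Q hQpos γ hγ hrv
  have hsumQ : Summable Q := summable_Q Q hQpos γ hγ hrv
  have htail : Tendsto (fun N : ℕ => ∑' k, Q (k + N)) atTop (nhds 0) := tendsto_sum_nat_add Q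
  have hev := htail.eventually_lt_const (show (0:ℝ) < ε / (2*C) by positivity)
  rw [eventually_atTop] at hev
  obtain ⟨N₀, hN₀⟩ := hev
  set N : ℕ := max (max N₀ n₂) 1 with hNdef
  have hN1 : 1 ≤ N := le_max_right _ _
  have hNN₀ : N₀ ≤ N := le_trans (le_max_left _ _) (le_max_left _ _)
  have hNn₂ : n₂ ≤ N := le_trans (le_max_right _ _) (le_max_left _ _)
  refine ⟨N, ?_⟩
  have hfnonneg : ∀ n : ℕ, 1 ≤ n →
      0 ≤ (1 / Q n) * ∑ k ∈ Finset.Icc N (n - N), Q k * Q (n - k) := by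
    intro n hn
    apply mul_nonneg (one_div_pos.mpr (hQpos n hn)).le
    apply Finset.sum_nonneg
    intro k hk
    obtain ⟨hk1, hk2⟩ := Finset.mem_Icc.mp hk
    have hkn : 1 ≤ k := le_trans hN1 hk1
    have hnk : 1 ≤ n - k := by omega
    exact mul_nonneg (hQpos k hkn).le (hQpos _ hnk).le
  have hmain : ∀ᶠ n in atTop,
      (1 / Q n) * ∑ k ∈ Finset.Icc N (n - N), Q k * Q (n - k) ≤ ε := by
    rw [eventually_atTop]
    refine ⟨max n₂ 1, fun n hn => ?_⟩
    have hn₂n : n₂ ≤ n := le_trans (le_max_left _ _) hn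
    have hn1 : 1 ≤ n := le_trans (le_max_right _ _) hn
    have hQn : 0 < Q n := hQpos n hn1
    by_cases h2N : 2 * N ≤ n
    · set T : ℝ := ∑' k, Q (k + N) with hTdef
      have hT : T < ε / (2*C) := hN₀ N hNN₀
      have hT0 : 0 ≤ T := tsum_nonneg (fun k => (hQpos _ (by omega)).le)
      have hsumshift : Summable (fun j : ℕ => Q (j + N)) := (summable_nat_add_iff N).mpr hsumQ
      have hterm : ∀ k ∈ Finset.Icc N (n - N),
          Q k * Q (n - k) ≤ C * Q n * (Q k + Q (n - k)) := by
        intro k hk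
        obtain ⟨hk1, hk2⟩ := Finset.mem_Icc.mp hk
        have hk1' : 1 ≤ k := le_trans hN1 hk1
        have hkn : k ≤ n := by omega
        have hnk1 : 1 ≤ n - k := by omega
        have hQk : 0 < Q k := hQpos k hk1'
        have hQnk : 0 < Q (n - k) := hQpos _ hnk1
        rcases le_or_gt (2 * k) n with hcase | hcase
        · have hb : Q (n - k) ≤ C * Q n := hL1 n hn₂n (n - k) (by omega) (by omega)
          nlinarith
        · have hb : Q k ≤ C * Q n := hL1 n hn₂n k hkn (by omega)
          nlinarith
      have hrefl : ∑ k ∈ Finset.Icc N (n - N), Q (n - k)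
          = ∑ k ∈ Finset.Icc N (n - N), Q k := by
        apply Finset.sum_nbij' (fun k => n - k) (fun k => n - k)
        · intro a ha; rw [Finset.mem_Icc] at ha ⊢; omega
        · intro a ha; rw [Finset.mem_Icc] at ha ⊢; omega
        · intro a ha; rw [Finset.mem_Icc] at ha; omega
        · intro a ha; rw [Finset.mem_Icc] at ha; omega
        · intro a ha; rfl
      have hIccle : ∑ k ∈ Finset.Icc N (n - N), Q k ≤ T := by
        have heq : ∑ k ∈ Finset.Icc N (n - N), Q k
            = ∑ j ∈ Finset.range (n - N - N + 1), Q (j + N) := by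
          apply Finset.sum_nbij' (fun k => k - N) (fun j => j + N)
          · intro a ha; rw [Finset.mem_Icc] at ha; rw [Finset.mem_range]; omega
          · intro a ha; rw [Finset.mem_range] at ha; rw [Finset.mem_Icc]; omega
          · intro a ha; rw [Finset.mem_Icc] at ha; omega
          · intro a _; omega
          · intro a ha; rw [Finset.mem_Icc] at ha; congr 1; omega
        rw [heq, hTdef]
        exact Summable.sum_le_tsum _ (fun i _ => (hQpos _ (by omega)).le) hsumshift
      have hS : ∑ k ∈ Finset.Icc N (n - N), Q k * Q (n - k) ≤ C * Q n * (2 * T) := by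
        calc ∑ k ∈ Finset.Icc N (n - N), Q k * Q (n - k)
            ≤ ∑ k ∈ Finset.Icc N (n - N), C * Q n * (Q k + Q (n - k)) :=
              Finset.sum_le_sum hterm
          _ = C * Q n * (∑ k ∈ Finset.Icc N (n - N), Q k
                + ∑ k ∈ Finset.Icc N (n - N), Q (n - k)) := by
              rw [← Finset.mul_sum, Finset.sum_add_distrib]
          _ = C * Q n * (2 * ∑ k ∈ Finset.Icc N (n - N), Q k) := by rw [hrefl]; ring
          _ ≤ C * Q n * (2 * T) := by
              apply mul_le_mul_of_nonneg_left _ (by positivity)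
              linarith
      have h2CT : 2 * C * T < ε := by
        have := (lt_div_iff₀ (show (0:ℝ) < 2*C by positivity)).mp hT
        linarith
      calc (1 / Q n) * ∑ k ∈ Finset.Icc N (n - N), Q k * Q (n - k)
          ≤ (1 / Q n) * (C * Q n * (2 * T)) :=
            mul_le_mul_of_nonneg_left hS (one_div_pos.mpr hQn).le
        _ = 2 * C * T := by field_simp
        _ ≤ ε := h2CT.le
    · have hempty : Finset.Icc N (n - N) = ∅ := by
        apply Finset.Icc_eq_empty
        omega
      rw [hempty, Finset.sum_empty, mul_zero]
      exact hε.le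
  exact Filter.limsup_le_of_le
    (Filter.isCoboundedUnder_le_of_eventually_le atTop
      ((eventually_atTop).mpr ⟨1, fun n hn => hfnonneg n hn⟩)) hmain
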